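/- The remainder β[0,∞) \ [0,∞) of the Stone–Čech compactification of the half-line is connected; consequently, any clopen subset of β[0,∞) \ [0,∞) is empty or the whole remainder. -/

import Mathlib

open Set

/-- Directed (antitone) intersections of nonempty compact connected sets in a compact
Hausdorff space are connected. -/
lemma isConnected_iInter_antitone {X : Type*} [TopologicalSpace X] [T2Space X] [CompactSpace X]
    (C : ℕ → Set X) (hcomp : ∀ n, IsCompact (C n)) (hconn : ∀ n, IsConnected (C n))
    (hanti : Antitone C) : IsConnected (⋂ n, C n) := by
  have hdir : Directed (· ⊇ ·) C := fun i j =>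
    ⟨max i j, hanti (le_max_left i j), hanti (le_max_right i j)⟩
  have hne : (⋂ n, C n).Nonempty :=
    IsCompact.nonempty_iInter_of_directed_nonempty_isCompact_isClosed C hdir
      (fun n => (hconn n).nonempty) hcomp (fun n => (hcomp n).isClosed)
  refine ⟨hne, ?_⟩
  have hclosed : IsClosed (⋂ n, C n) := isClosed_iInter fun n => (hcomp n).isClosed
  rw [isPreconnected_iff_subset_of_fully_disjoint_closed hclosed]
  intro u v hu hv hsub hdisj
  obtain ⟨U, V, hU, hV, huU, hvV, hUV⟩ := normal_separation hu hv hdisj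
  -- some C n is contained in U ∪ V
  have hexists : ∃ n, C n ⊆ U ∪ V := by
    by_contra h
    push_neg at h
    have hne' : ((⋂ n, C n) ∩ (U ∪ V)ᶜ).Nonempty := by
      have := IsCompact.nonempty_iInter_of_directed_nonempty_isCompact_isClosed
        (fun n => C n ∩ (U ∪ V)ᶜ)
        (fun i j => by
          obtain ⟨k, hk1, hk2⟩ := hdir i j
          exact ⟨k, inter_subset_inter_left _ hk1, inter_subset_inter_left _ hk2⟩)
        (fun n => by
          rcases not_subset.mp (h n) with ⟨x, hx1, hx2⟩
          exact ⟨x, hx1, hx2⟩)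
        (fun n => (hcomp n).inter_right (hU.union hV).isClosed_compl)
        (fun n => (hcomp n).isClosed.inter (hU.union hV).isClosed_compl)
      rwa [← iInter_inter] at this
    obtain ⟨x, hx1, hx2⟩ := hne'
    exact hx2 (union_subset_union huU hvV (hsub hx1))
  obtain ⟨n, hn⟩ := hexists
  rcases (hconn n).isPreconnected.subset_or_subset hU hV hUV hn with hCU | hCV
  · left
    intro x hx
    have hxU : x ∈ U := hCU (mem_iInter.mp hx n)
    rcases hsub hx with hxu | hxv
    · exact hxu
    · exact absurd (hvV hxv) (fun hxV => hUV.ne_of_mem hxU hxV rfl)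
  · right
    intro x hx
    have hxV : x ∈ V := hCV (mem_iInter.mp hx n)
    rcases hsub hx with hxu | hxv
    · exact absurd (huU hxu) (fun hxU => hUV.ne_of_mem hxU hxV rfl)
    · exact hxv

/-- If `y < n` then `stoneCechUnit y` is not in the closure of the image of the tail `[n, ∞)`. -/
lemma unit_not_mem_closure_tail (y : NNReal) (n : ℕ) (hy : (y : ℝ) < n) :
    stoneCechUnit y ∉ closure (stoneCechUnit '' Set.Ici (n : NNReal)) := by
  have h0mem : (0 : ℝ) ∈ Icc (0 : ℝ) (n : ℝ) := ⟨le_refl _, Nat.cast_nonneg n⟩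
  -- the test function: x ↦ max (n - x) 0, valued in Icc 0 n
  set f : NNReal → Icc (0 : ℝ) (n : ℝ) := fun x =>
    ⟨max ((n : ℝ) - x) 0, le_max_right _ _,
      max_le (by linarith [x.coe_nonneg]) (Nat.cast_nonneg n)⟩ with hf_def
  have hf : Continuous f := by
    apply Continuous.subtype_mk
    exact (continuous_const.sub NNReal.continuous_coe).max continuous_const
  haveI : CompactSpace (Icc (0 : ℝ) (n : ℝ)) := isCompact_iff_compactSpace.mp isCompact_Icc
  set g := stoneCechExtend hf with hg_def
  have hge : g ∘ stoneCechUnit = f := stoneCechExtend_extends hf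
  intro hmem
  have hsub : closure (stoneCechUnit '' Set.Ici (n : NNReal)) ⊆ g ⁻¹' {⟨0, h0mem⟩} := by
    apply closure_minimal
    · rintro _ ⟨x, hx, rfl⟩
      have : g (stoneCechUnit x) = f x := congrFun hge x
      rw [mem_preimage, mem_singleton_iff, this]
      apply Subtype.ext
      simp only [hf_def]
      exact max_eq_right (by
        have : (n : ℝ) ≤ (x : ℝ) := by exact_mod_cast hx
        linarith)
    · exact (isClosed_singleton).preimage (continuous_stoneCechExtend hf)
  have h1 : g (stoneCechUnit y) = ⟨0, h0mem⟩ := hsub hmem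
  have h2 : g (stoneCechUnit y) = f y := congrFun hge y
  rw [h2] at h1
  have h3 : max ((n : ℝ) - y) 0 = 0 := congrArg Subtype.val h1
  have h4 : (0 : ℝ) < (n : ℝ) - y := by linarith
  rw [max_eq_left h4.le] at h3
  linarith

lemma remainder_eq_iInter :
    (Set.range (stoneCechUnit : NNReal → StoneCech NNReal))ᶜ =
      ⋂ n : ℕ, closure (stoneCechUnit '' Set.Ici (n : NNReal)) := by
  ext x
  simp only [mem_compl_iff, mem_range, mem_iInter]
  constructor
  · intro hx n
    by_contra h
    -- x avoids both closure(tail) and the compact image of [0, n]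
    have hK : IsCompact (stoneCechUnit '' Set.Icc 0 (n : NNReal)) :=
      isCompact_Icc.image continuous_stoneCechUnit
    have hxK : x ∉ stoneCechUnit '' Set.Icc 0 (n : NNReal) := by
      rintro ⟨z, _, rfl⟩; exact hx ⟨z, rfl⟩
    have hopen : IsOpen ((closure (stoneCechUnit '' Set.Ici (n : NNReal)))ᶜ ∩
        (stoneCechUnit '' Set.Icc 0 (n : NNReal))ᶜ) :=
      (isClosed_closure.isOpen_compl).inter hK.isClosed.isOpen_compl
    obtain ⟨z, hz⟩ := denseRange_stoneCechUnit.exists_mem_open hopen ⟨x, h, hxK⟩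
    rcases le_total z (n : NNReal) with hzn | hzn
    · exact hz.2 ⟨z, ⟨zero_le, hzn⟩, rfl⟩
    · exact hz.1 (subset_closure ⟨z, hzn, rfl⟩)
  · rintro hx ⟨y, rfl⟩
    have hyn : (y : ℝ) < (⌊(y : ℝ)⌋₊ + 1 : ℕ) := by
      push_cast
      exact Nat.lt_floor_add_one (y : ℝ)
    exact unit_not_mem_closure_tail y (⌊(y : ℝ)⌋₊ + 1) hyn (hx _)

/-- the remainder `β[0,∞) \ [0,∞)` is connected; consequently, every clopen
subset of the remainder is empty or the whole remainder. (Here `[0,∞)` is realized as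
`ℝ≥0` with its usual topology.) -/
theorem stmt14 :
    IsConnected ((Set.range (stoneCechUnit : NNReal → StoneCech NNReal))ᶜ) ∧
      ∀ S : Set ↥((Set.range (stoneCechUnit : NNReal → StoneCech NNReal))ᶜ),
        IsClopen S → S = ∅ ∨ S = Set.univ := by
  have hconn : IsConnected ((Set.range (stoneCechUnit : NNReal → StoneCech NNReal))ᶜ) := by
    rw [remainder_eq_iInter]
    apply isConnected_iInter_antitone
    · intro n
      exact isClosed_closure.isCompact
    · intro n
      refine ⟨⟨stoneCechUnit (n : NNReal), subset_closure ⟨_, mem_Ici.mpr le_rfl, rfl⟩⟩, ?_⟩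
      exact ((isPreconnected_Ici.image _ continuous_stoneCechUnit.continuousOn)).closure
    · intro m k hmk
      apply closure_mono
      apply image_mono
      exact Ici_subset_Ici.mpr (by exact_mod_cast hmk)
  refine ⟨hconn, ?_⟩
  haveI : ConnectedSpace ((Set.range (stoneCechUnit : NNReal → StoneCech NNReal))ᶜ :
      Set (StoneCech NNReal)) := Subtype.connectedSpace hconn
  intro S hS
  exact isClopen_iff.mp hS
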